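/- Let S be a non-empty set of positive integers and let G_S = F₂/⟨⟨w_j : j ∈ S⟩⟩. Then G_S is not a free group (it is not isomorphic to a free group of any rank). -/

import Mathlib

/-- `a`: the first basis element of the free group `F₂ = F(a,b)`. -/
def fa : FreeGroup (Fin 2) := FreeGroup.of 0

/-- `b`: the second basis element of the free group `F₂ = F(a,b)`. -/
def fb : FreeGroup (Fin 2) := FreeGroup.of 1

/-- The relator `w_j = a b^{2j} a b^{4j} ⋯ a b^{100j}`, i.e. the (ordered) product over
`i = 1,…,50` of the factors `a · b^{2ij}`. -/
def wrel (j : ℕ) : FreeGroup (Fin 2) :=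
  ((List.range 50).map fun i => fa * fb ^ (2 * (i + 1) * j)).prod

/-- `G_S = F₂ / ⟨⟨w_j : j ∈ S⟩⟩`: the quotient of `F₂` by the normal closure of the set of
relators `w_j`, `j ∈ S`. -/
abbrev GS (S : Set ℕ) : Type :=
  FreeGroup (Fin 2) ⧸ Subgroup.normalClosure {x | ∃ j ∈ S, x = wrel j}

lemma hom_wrel {M : Type*} [Monoid M] (φ : FreeGroup (Fin 2) →* M) (j : ℕ)
    (hb : φ fb ^ 2 = 1) : φ (wrel j) = φ fa ^ 50 := by
  unfold wrel
  rw [map_list_prod, List.map_map]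
  have h1 : (List.map (⇑φ ∘ fun i => fa * fb ^ (2 * (i + 1) * j)) (List.range 50))
      = List.replicate 50 (φ fa) := by
    rw [List.eq_replicate_iff]
    constructor
    · simp
    · intro x hx
      simp only [List.mem_map, List.mem_range, Function.comp_apply] at hx
      obtain ⟨i, -, rfl⟩ := hx
      rw [map_mul, map_pow, mul_assoc 2, pow_mul, hb, one_pow, mul_one]
  rw [h1, List.prod_replicate]

lemma zpow_of_sq {G : Type*} [Group G] {g : G} (hg : g * g = 1) (n : ℤ) :
    g ^ n = 1 ∨ g ^ n = g := by
  have h2 : g ^ (2 : ℤ) = 1 := by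
    rw [show (2:ℤ) = 1 + 1 by norm_num, zpow_add, zpow_one, hg]
  rcases Int.even_or_odd n with ⟨k, rfl⟩ | ⟨k, rfl⟩
  · left; rw [← two_mul, zpow_mul, h2, one_zpow]
  · right; rw [zpow_add, zpow_mul, h2, one_zpow, zpow_one, one_mul]

lemma exists_functional : ∀ g1 g2 : ZMod 2 × ZMod 2 × ZMod 2,
    ∃ c : ZMod 2 × ZMod 2 × ZMod 2,
      c.1 * g1.1 + c.2.1 * g1.2.1 + c.2.2 * g1.2.2 = 0 ∧
      c.1 * g2.1 + c.2.1 * g2.2.1 + c.2.2 * g2.2.2 = 0 ∧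
      (c.1 = 1 ∨ c.2.1 = 1 ∨ c.2.2 = 1) := by decide

def dotHom (c : ZMod 2 × ZMod 2 × ZMod 2) : (ZMod 2 × ZMod 2 × ZMod 2) →+ ZMod 2 where
  toFun x := c.1 * x.1 + c.2.1 * x.2.1 + c.2.2 * x.2.2
  map_zero' := by simp
  map_add' x y := by
    simp only [Prod.fst_add, Prod.snd_add]
    ring

/-- Let `S` be a non-empty set of positive integers and `G_S = F₂/⟨⟨w_j : j ∈ S⟩⟩`.
Then `G_S` is not a free group (not isomorphic to a free group of any rank). -/
theorem GS_not_free (S : Set ℕ) (hS : S.Nonempty) (hpos : ∀ j ∈ S, 0 < j) :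
    ¬ IsFreeGroup (GS S) := by
  classical
  intro hfree
  obtain ⟨ι, ⟨b⟩⟩ := hfree.nonempty_basis
  set N := Subgroup.normalClosure {x | ∃ j ∈ S, x = wrel j} with hN
  let π : FreeGroup (Fin 2) →* GS S := QuotientGroup.mk' N
  have hπs : Function.Surjective π := QuotientGroup.mk'_surjective N
  have hgen : ∀ x : FreeGroup (Fin 2),
      π x ∈ Subgroup.closure ({π fa, π fb} : Set (GS S)) := by
    intro x
    induction x using FreeGroup.induction_on with
    | C1 => rw [map_one]; exact one_mem _
    | of i =>
        fin_cases i
        · exact Subgroup.subset_closure (Set.mem_insert _ _)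
        · exact Subgroup.subset_closure (Set.mem_insert_of_mem _ rfl)
    | inv_of i hi => rw [map_inv]; exact inv_mem hi
    | mul x y hx hy => rw [map_mul]; exact mul_mem hx hy
  have htop : Subgroup.closure ({π fa, π fb} : Set (GS S)) = ⊤ := by
    rw [Subgroup.eq_top_iff']
    intro g
    obtain ⟨x, rfl⟩ := hπs g
    exact hgen x
  have hrel : ∀ j ∈ S, π (wrel j) = 1 := fun j hj =>
    (QuotientGroup.eq_one_iff _).2 (Subgroup.subset_normalClosure ⟨j, hj, rfl⟩)
  by_cases h3 : ∃ x1 x2 x3 : ι, x1 ≠ x2 ∧ x1 ≠ x3 ∧ x2 ≠ x3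
  · -- rank ≥ 3 : contradiction with 2-generation
    obtain ⟨x1, x2, x3, h12, h13, h23⟩ := h3
    let E1 : Multiplicative (ZMod 2 × ZMod 2 × ZMod 2) := Multiplicative.ofAdd (1, 0, 0)
    let E2 : Multiplicative (ZMod 2 × ZMod 2 × ZMod 2) := Multiplicative.ofAdd (0, 1, 0)
    let E3 : Multiplicative (ZMod 2 × ZMod 2 × ZMod 2) := Multiplicative.ofAdd (0, 0, 1)
    let g : ι → Multiplicative (ZMod 2 × ZMod 2 × ZMod 2) := fun x =>
      if x = x1 then E1 else if x = x2 then E2 else if x = x3 then E3 else 1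
    let h : GS S →* Multiplicative (ZMod 2 × ZMod 2 × ZMod 2) :=
      (FreeGroup.lift g).comp b.repr.toMonoidHom
    have hbx : ∀ x : ι, h (b x) = g x := by
      intro x
      show (FreeGroup.lift g) (b.repr (b x)) = g x
      rw [b.repr_apply_coe, FreeGroup.lift_apply_of]
    have hmap : Subgroup.closure ({h (π fa), h (π fb)} :
        Set (Multiplicative (ZMod 2 × ZMod 2 × ZMod 2))) = h.range := by
      have : ({h (π fa), h (π fb)} : Set (Multiplicative (ZMod 2 × ZMod 2 × ZMod 2)))
          = h '' {π fa, π fb} := by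
        rw [Set.image_insert_eq, Set.image_singleton]
      rw [this, ← MonoidHom.map_closure, htop, ← MonoidHom.range_eq_map]
    have hE1 : E1 ∈ Subgroup.closure ({h (π fa), h (π fb)} :
        Set (Multiplicative (ZMod 2 × ZMod 2 × ZMod 2))) := by
      rw [hmap]; exact ⟨b x1, by rw [hbx]; simp [g]⟩
    have hE2 : E2 ∈ Subgroup.closure ({h (π fa), h (π fb)} :
        Set (Multiplicative (ZMod 2 × ZMod 2 × ZMod 2))) := by
      rw [hmap]; exact ⟨b x2, by rw [hbx]; simp [g, h12.symm]⟩
    have hE3 : E3 ∈ Subgroup.closure ({h (π fa), h (π fb)} :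
        Set (Multiplicative (ZMod 2 × ZMod 2 × ZMod 2))) := by
      rw [hmap]; exact ⟨b x3, by rw [hbx]; simp [g, h13.symm, h23.symm]⟩
    obtain ⟨c, hc1, hc2, hc3⟩ :=
      exists_functional (h (π fa)).toAdd (h (π fb)).toAdd
    let ψ : Multiplicative (ZMod 2 × ZMod 2 × ZMod 2) →* Multiplicative (ZMod 2) :=
      AddMonoidHom.toMultiplicative (dotHom c)
    have hψ : ∀ x : Multiplicative (ZMod 2 × ZMod 2 × ZMod 2),
        ψ x = Multiplicative.ofAdd (dotHom c x.toAdd) := fun x => rfl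
    have hker : Subgroup.closure ({h (π fa), h (π fb)} :
        Set (Multiplicative (ZMod 2 × ZMod 2 × ZMod 2))) ≤ ψ.ker := by
      rw [Subgroup.closure_le]
      intro x hx
      rcases hx with rfl | hx
      · show ψ _ = 1
        rw [hψ]
        show Multiplicative.ofAdd (dotHom c (h (π fa)).toAdd) = 1
        have : dotHom c (h (π fa)).toAdd = 0 := hc1
        rw [this]; rfl
      · rcases hx with rfl
        show ψ _ = 1
        rw [hψ]
        have : dotHom c (h (π fb)).toAdd = 0 := hc2
        rw [this]; rfl
    have k1 : ψ E1 = 1 := hker hE1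
    have k2 : ψ E2 = 1 := hker hE2
    have k3 : ψ E3 = 1 := hker hE3
    rw [hψ] at k1 k2 k3
    have e1 : dotHom c (1, 0, 0) = 0 := by
      have := congrArg Multiplicative.toAdd k1; simpa [E1] using this
    have e2 : dotHom c (0, 1, 0) = 0 := by
      have := congrArg Multiplicative.toAdd k2; simpa [E2] using this
    have e3 : dotHom c (0, 0, 1) = 0 := by
      have := congrArg Multiplicative.toAdd k3; simpa [E3] using this
    simp only [dotHom, AddMonoidHom.coe_mk, ZeroHom.coe_mk, mul_one, mul_zero,
      add_zero, zero_add] at e1 e2 e3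
    rcases hc3 with h | h | h
    · rw [e1] at h; exact absurd h (by decide)
    · rw [e2] at h; exact absurd h (by decide)
    · rw [e3] at h; exact absurd h (by decide)
  · by_cases h2 : ∃ x1 x2 : ι, x1 ≠ x2
    · -- rank exactly 2 : Hopfian argument via abelianization
      obtain ⟨x1, x2, h12⟩ := h2
      have hall : ∀ z : ι, z = x1 ∨ z = x2 := by
        intro z
        by_contra hz
        push_neg at hz
        exact h3 ⟨x1, x2, z, h12, Ne.symm hz.1, Ne.symm hz.2⟩
      let e : ι ≃ Fin 2 :=
        { toFun := fun z => if z = x1 then 0 else 1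
          invFun := fun i => if i = 0 then x1 else x2
          left_inv := by
            intro z
            rcases hall z with h | h
            · subst h; simp
            · subst h
              simp only [if_neg (Ne.symm h12), if_neg (show ¬ (1 : Fin 2) = 0 from by decide)]
          right_inv := by
            intro i
            fin_cases i
            · simp
            · show (if (if (1 : Fin 2) = 0 then x1 else x2) = x1 then (0 : Fin 2) else 1) = 1
              rw [if_neg (by decide : ¬ (1 : Fin 2) = 0), if_neg (Ne.symm h12)] }
      let f : FreeGroup (Fin 2) →* FreeGroup (Fin 2) :=
        (FreeGroup.freeGroupCongr e).toMonoidHom.comp (b.repr.toMonoidHom.comp π)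
      have hfs : Function.Surjective f :=
        (FreeGroup.freeGroupCongr e).surjective.comp (b.repr.surjective.comp hπs)
      let ab : FreeGroup (Fin 2) →* Multiplicative (ℤ × ℤ) :=
        FreeGroup.lift (fun i => if i = 0 then Multiplicative.ofAdd ((1:ℤ), (0:ℤ))
          else Multiplicative.ofAdd ((0:ℤ), (1:ℤ)))
      have haba : ab fa = Multiplicative.ofAdd (1, 0) := by simp [ab, fa]
      have habb : ab fb = Multiplicative.ofAdd (0, 1) := by simp [ab, fb]
      have habs : Function.Surjective ab := by
        intro z
        refine ⟨fa ^ z.toAdd.1 * fb ^ z.toAdd.2, ?_⟩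
        rw [map_mul, map_zpow, map_zpow, haba, habb, ← ofAdd_zsmul, ← ofAdd_zsmul, ← ofAdd_add]
        have h : z.toAdd.1 • ((1:ℤ), (0:ℤ)) + z.toAdd.2 • ((0:ℤ), (1:ℤ)) = z.toAdd := by
          simp [Prod.ext_iff]
        rw [h, ofAdd_toAdd]
      set u := (ab (f fa)).toAdd with hu
      set v := (ab (f fb)).toAdd with hv
      let L : (ℤ × ℤ) →ₗ[ℤ] (ℤ × ℤ) :=
        LinearMap.coprod (LinearMap.toSpanSingleton ℤ (ℤ × ℤ) u)
          (LinearMap.toSpanSingleton ℤ (ℤ × ℤ) v)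
      let Mm : Multiplicative (ℤ × ℤ) →* Multiplicative (ℤ × ℤ) :=
        AddMonoidHom.toMultiplicative L.toAddMonoidHom
      have hMm : ∀ z : Multiplicative (ℤ × ℤ),
          Mm z = Multiplicative.ofAdd (L z.toAdd) := fun z => rfl
      have hL10 : L ((1:ℤ), (0:ℤ)) = u := by
        simp [L, LinearMap.toSpanSingleton_apply]
      have hL01 : L ((0:ℤ), (1:ℤ)) = v := by
        simp [L, LinearMap.toSpanSingleton_apply]
      have hcomm : Mm.comp ab = ab.comp f := by
        apply FreeGroup.ext_hom
        intro i
        fin_cases i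
        · show Mm (ab fa) = ab (f fa)
          rw [haba, hMm, toAdd_ofAdd, hL10, hu, ofAdd_toAdd]
        · show Mm (ab fb) = ab (f fb)
          rw [habb, hMm, toAdd_ofAdd, hL01, hv, ofAdd_toAdd]
      have hLs : Function.Surjective L := by
        intro y
        obtain ⟨w0, hw0⟩ := habs (Multiplicative.ofAdd y)
        obtain ⟨x, rfl⟩ := hfs w0
        refine ⟨(ab x).toAdd, ?_⟩
        have h := DFunLike.congr_fun hcomm x
        simp only [MonoidHom.comp_apply] at h
        rw [hMm] at h
        have := congrArg Multiplicative.toAdd h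
        rw [toAdd_ofAdd] at this
        rw [this, hw0, toAdd_ofAdd]
      have hLi : Function.Injective L :=
        IsNoetherian.injective_of_surjective_endomorphism L hLs
      obtain ⟨j, hj⟩ := hS
      have hfw : f (wrel j) = 1 := by
        show (FreeGroup.freeGroupCongr e) (b.repr (π (wrel j))) = 1
        rw [hrel j hj, map_one, map_one]
      have habw : ab (wrel j) = 1 := by
        have h := DFunLike.congr_fun hcomm (wrel j)
        simp only [MonoidHom.comp_apply] at h
        rw [hfw, map_one, hMm] at h
        have h0 : L (ab (wrel j)).toAdd = 0 := by
          simpa using congrArg Multiplicative.toAdd h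
        have h1 : (ab (wrel j)).toAdd = (0 : ℤ × ℤ) := hLi (by rw [h0, map_zero])
        rw [← ofAdd_toAdd (ab (wrel j)), h1]; rfl
      let σ : FreeGroup (Fin 2) →* Multiplicative ℤ :=
        FreeGroup.lift (fun i => if i = 0 then Multiplicative.ofAdd (1:ℤ) else 1)
      have hσa : σ fa = Multiplicative.ofAdd (1:ℤ) := by simp [σ, fa]
      have hσb : σ fb = 1 := by simp [σ, fb]
      have hσw : σ (wrel j) = Multiplicative.ofAdd (50:ℤ) := by
        rw [hom_wrel σ j (by rw [hσb, one_pow]), hσa, ← ofAdd_nsmul]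
        norm_num
      have hfst : (AddMonoidHom.toMultiplicative (AddMonoidHom.fst ℤ ℤ)).comp ab = σ := by
        apply FreeGroup.ext_hom
        intro i
        fin_cases i
        · show AddMonoidHom.toMultiplicative (AddMonoidHom.fst ℤ ℤ) (ab fa) = σ fa
          rw [haba, hσa]; rfl
        · show AddMonoidHom.toMultiplicative (AddMonoidHom.fst ℤ ℤ) (ab fb) = σ fb
          rw [habb, hσb]; rfl
      have hcontr : σ (wrel j) = 1 := by
        rw [← hfst]
        simp only [MonoidHom.comp_apply]
        rw [habw, map_one]
      rw [hσw] at hcontr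
      have : (50:ℤ) = 0 := by simpa using congrArg Multiplicative.toAdd hcontr
      norm_num at this
    · -- rank ≤ 1
      push_neg at h2
      let β : FreeGroup (Fin 2) →* Multiplicative (ZMod 2 × ZMod 2) :=
        FreeGroup.lift (fun i => if i = 0 then Multiplicative.ofAdd ((1:ZMod 2), (0:ZMod 2))
          else Multiplicative.ofAdd ((0:ZMod 2), (1:ZMod 2)))
      have hβa : β fa = Multiplicative.ofAdd (1, 0) := by simp [β, fa]
      have hβb : β fb = Multiplicative.ofAdd (0, 1) := by simp [β, fb]
      have hβker : N ≤ β.ker := by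
        rw [hN]
        apply Subgroup.normalClosure_le_normal
        rintro x ⟨j, hj, rfl⟩
        show β (wrel j) = 1
        rw [hom_wrel β j (by rw [hβb]; decide), hβa]
        decide
      let β' : GS S →* Multiplicative (ZMod 2 × ZMod 2) := QuotientGroup.lift N β hβker
      have hβ' : ∀ x, β' (π x) = β x := fun x => rfl
      have hrange : Subgroup.closure (Set.range ⇑b) = (⊤ : Subgroup (GS S)) := by
        have h1 : Set.range ⇑b
            = ⇑b.repr.symm.toMonoidHom '' Set.range (FreeGroup.of : ι → FreeGroup ι) := by
          rw [← Set.range_comp]; rfl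
        rw [h1, ← MonoidHom.map_closure, FreeGroup.closure_range_of,
          Subgroup.map_top_of_surjective _ b.repr.symm.surjective]
      cases isEmpty_or_nonempty ι with
      | inl hempty =>
          rw [Set.range_eq_empty ⇑b, Subgroup.closure_empty] at hrange
          have hfa1 : π fa = 1 := by
            have h : π fa ∈ (⊥ : Subgroup (GS S)) := by rw [hrange]; trivial
            exact Subgroup.mem_bot.mp h
          have hcontr : Multiplicative.ofAdd ((1:ZMod 2), (0:ZMod 2)) = 1 := by
            rw [← hβa, ← hβ' fa, hfa1, map_one]
          exact absurd hcontr (by decide)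
      | inr hne =>
          obtain ⟨x0⟩ := hne
          have hrng : Set.range ⇑b = {b x0} := by
            ext z
            constructor
            · rintro ⟨y, rfl⟩
              rw [h2 y x0]; rfl
            · rintro rfl
              exact ⟨x0, rfl⟩
          rw [hrng] at hrange
          have ha : π fa ∈ Subgroup.closure {b x0} := by rw [hrange]; trivial
          have hb' : π fb ∈ Subgroup.closure {b x0} := by rw [hrange]; trivial
          rw [Subgroup.mem_closure_singleton] at ha hb'
          obtain ⟨n, hn⟩ := ha
          obtain ⟨m, hm⟩ := hb'
          have hgg : ∀ z : Multiplicative (ZMod 2 × ZMod 2), z * z = 1 := by decide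
          have hA : (β' (b x0)) ^ n = Multiplicative.ofAdd ((1:ZMod 2), (0:ZMod 2)) := by
            rw [← map_zpow, hn, hβ' fa, hβa]
          have hB : (β' (b x0)) ^ m = Multiplicative.ofAdd ((0:ZMod 2), (1:ZMod 2)) := by
            rw [← map_zpow, hm, hβ' fb, hβb]
          rcases zpow_of_sq (hgg (β' (b x0))) n with h | h
          · rw [h] at hA; exact absurd hA.symm (by decide)
          · rw [h] at hA
            rcases zpow_of_sq (hgg (β' (b x0))) m with h' | h'
            · rw [h'] at hB; exact absurd hB.symm (by decide)
            · rw [h'] at hB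
              rw [hA] at hB
              exact absurd hB (by decide)
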